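/- Let ε_1,...,ε_N be i.i.d. with density f_ε on [-1,1] satisfying min(P(ε ≥ 1-κ), P(ε ≤ -1+κ)) ≥ c·κ for all κ ∈ (0,1) with constant c > 0. Then for any function values f_1,...,f_N ∈ ℝ with |f_i| ≤ 1 and any Δ > 0, P(max_{i≤N} |ε_i - f_i| ≤ 1 + Δ) ≤ exp(-c·Σ_{i=1}^N (|f_i| - Δ)_+). -/

import Mathlib

open Set MeasureTheory

theorem stmt2 {Ω : Type*} [MeasurableSpace Ω] (P : Measure Ω) [IsProbabilityMeasure P]
    (N : ℕ) (ε : Fin N → Ω → ℝ) (hmeas : ∀ i, Measurable (ε i))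
    (hindep : ProbabilityTheory.iIndepFun ε P)
    (hident : ∀ i j, Measure.map (ε i) P = Measure.map (ε j) P)
    (c : ℝ) (hc : 0 < c)
    (htail : ∀ i, ∀ κ : ℝ, 0 < κ → κ < 1 →
      c * κ ≤ min (P {ω | 1 - κ ≤ ε i ω}).toReal (P {ω | ε i ω ≤ -1 + κ}).toReal)
    (hsupp : ∀ i, P {ω | |ε i ω| ≤ 1} = 1)
    (fv : Fin N → ℝ) (hfv : ∀ i, |fv i| ≤ 1) (Δ : ℝ) (hΔ : 0 < Δ) :
    (P {ω | ∀ i, |ε i ω - fv i| ≤ 1 + Δ}).toReal ≤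
      Real.exp (-c * ∑ i, max (|fv i| - Δ) 0) := by
  set s : Fin N → Set Ω := fun i => {ω | |ε i ω - fv i| ≤ 1 + Δ} with hs
  have hsm : ∀ i, MeasurableSet (s i) := fun i =>
    measurableSet_le ((hmeas i).sub measurable_const).abs measurable_const
  have key : ∀ i, (P (s i)).toReal ≤ Real.exp (-(c * max (|fv i| - Δ) 0)) := by
    intro i
    have hle1 : (P (s i)).toReal ≤ 1 := by
      rw [← ENNReal.toReal_one]
      exact ENNReal.toReal_mono (by simp) prob_le_one
    rcases le_or_gt (|fv i|) Δ with h | h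
    · have : max (|fv i| - Δ) 0 = 0 := max_eq_right (by linarith)
      rw [this, mul_zero, neg_zero, Real.exp_zero]
      exact hle1
    · set κ := |fv i| - Δ with hκdef
      have hκ0 : 0 < κ := sub_pos.2 h
      have hκ1 : κ < 1 := by have := hfv i; simp only [hκdef]; linarith
      have hmax : max (|fv i| - Δ) 0 = κ := max_eq_left hκ0.le
      have step : ∀ κ' : ℝ, 0 < κ' → κ' < κ → (P (s i)).toReal ≤ 1 - c * κ' := by
        intro κ' hκ'0 hκ'κ
        have hκ'1 : κ' < 1 := hκ'κ.trans hκ1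
        have htail' := htail i κ' hκ'0 hκ'1
        have hfvne : fv i ≠ 0 := by
          intro h0; rw [h0, abs_zero] at h; linarith
        -- choose the bad set depending on sign of fv i
        rcases hfvne.lt_or_gt with hneg | hpos
        · -- fv i < 0 : use {ω | 1 - κ' ≤ ε i ω}
          set B : Set Ω := {ω | 1 - κ' ≤ ε i ω} with hB
          have hBm : MeasurableSet B := measurableSet_le measurable_const (hmeas i)
          have hdisj : Disjoint (s i) B := by
            rw [Set.disjoint_left]
            intro ω hω hωB
            simp only [hs, Set.mem_setOf_eq, abs_le] at hω
            simp only [hB, Set.mem_setOf_eq] at hωB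
            have habs : |fv i| = -fv i := abs_of_neg hneg
            have : ε i ω - fv i ≥ 1 - κ' + κ + Δ := by
              simp only [hκdef] at *; rw [habs] at *; linarith
            linarith [hω.2]
          have hbad : c * κ' ≤ (P B).toReal := le_trans htail' (min_le_left _ _)
          have hsum : (P (s i)).toReal + (P B).toReal ≤ 1 := by
            rw [← ENNReal.toReal_add (measure_ne_top _ _) (measure_ne_top _ _),
              ← measure_union hdisj hBm, ← ENNReal.toReal_one]
            exact ENNReal.toReal_mono (by simp) prob_le_one
          linarith
        · -- fv i > 0 : use {ω | ε i ω ≤ -1 + κ'}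
          set B : Set Ω := {ω | ε i ω ≤ -1 + κ'} with hB
          have hBm : MeasurableSet B := measurableSet_le (hmeas i) measurable_const
          have hdisj : Disjoint (s i) B := by
            rw [Set.disjoint_left]
            intro ω hω hωB
            simp only [hs, Set.mem_setOf_eq, abs_le] at hω
            simp only [hB, Set.mem_setOf_eq] at hωB
            have habs : |fv i| = fv i := abs_of_pos hpos
            have : ε i ω - fv i ≤ -1 + κ' - κ - Δ := by
              simp only [hκdef] at *; rw [habs] at *; linarith
            linarith [hω.1]
          have hbad : c * κ' ≤ (P B).toReal := le_trans htail' (min_le_right _ _)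
          have hsum : (P (s i)).toReal + (P B).toReal ≤ 1 := by
            rw [← ENNReal.toReal_add (measure_ne_top _ _) (measure_ne_top _ _),
              ← measure_union hdisj hBm, ← ENNReal.toReal_one]
            exact ENNReal.toReal_mono (by simp) prob_le_one
          linarith
      have main : (P (s i)).toReal ≤ 1 - c * κ := by
        by_contra hcon
        push_neg at hcon
        set δ : ℝ := (P (s i)).toReal - (1 - c * κ) with hδ
        have hδ0 : 0 < δ := by simp only [hδ]; linarith
        set κ' : ℝ := max (κ - δ / (2 * c)) (κ / 2) with hκ'
        have hκ'0 : 0 < κ' := lt_of_lt_of_le (by linarith) (le_max_right _ _)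
        have hκ'κ : κ' < κ := max_lt
          (by have h5 : 0 < δ / (2 * c) := by positivity
              linarith) (by linarith)
        have h2 : κ - δ / (2 * c) ≤ κ' := le_max_left _ _
        have h3 : c * (κ - δ / (2 * c)) ≤ c * κ' :=
          mul_le_mul_of_nonneg_left h2 hc.le
        have h4 : c * (κ - δ / (2 * c)) = c * κ - δ / 2 := by
          field_simp
        have h6 : c * κ - δ / 2 ≤ c * κ' := by linarith [h4 ▸ h3]
        have h7 := step κ' hκ'0 hκ'κ
        nlinarith [h6, h7, hδ0]
      rw [hmax]
      calc (P (s i)).toReal ≤ 1 - c * κ := main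
        _ ≤ Real.exp (-(c * κ)) := by
            have := Real.add_one_le_exp (-(c * κ)); linarith
  have hset : {ω | ∀ i, |ε i ω - fv i| ≤ 1 + Δ} = ⋂ i, s i := by
    ext ω; simp [hs, Set.mem_iInter]
  have hcm : ∀ i, MeasurableSet[MeasurableSpace.comap (ε i) inferInstance] (s i) :=
    fun i => ⟨{x | |x - fv i| ≤ 1 + Δ},
      measurableSet_le (measurable_id.sub measurable_const).abs measurable_const, rfl⟩
  rw [hset, hindep.meas_iInter hcm, ENNReal.toReal_prod]
  calc ∏ i, (P (s i)).toReal
      ≤ ∏ i, Real.exp (-(c * max (|fv i| - Δ) 0)) :=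
        Finset.prod_le_prod (fun i _ => ENNReal.toReal_nonneg) (fun i _ => key i)
    _ = Real.exp (∑ i, -(c * max (|fv i| - Δ) 0)) := (Real.exp_sum _ _).symm
    _ = Real.exp (-c * ∑ i, max (|fv i| - Δ) 0) := by
        congr 1
        rw [Finset.sum_neg_distrib, ← Finset.mul_sum, neg_mul]
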